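/- For p, q ≥ 1, the set D = {u : ℓ_p → ℓ_q : u linear, continuous and non-surjective} is (1, 𝔠)-lineable: every one-dimensional subspace of L(ℓ_p, ℓ_q) contained in D ∪ {0} is contained in a 𝔠-dimensional subspace contained in D ∪ {0}. -/

import Mathlib

open Set Cardinal

section aux

variable (p : ENNReal) [Fact (1 ≤ p)]

private lemma p_ne_zero : p ≠ 0 := (zero_lt_one.trans_le (Fact.out : 1 ≤ p)).ne'

private lemma bound_aux {t : ℝ} (ht0 : 0 ≤ t) (x : lp (fun _ : ℕ => ℝ) p) (n : ℕ) :
    ‖t ^ n * x n‖ ≤ t ^ n * ‖x‖ := by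
  rw [norm_mul, norm_pow, Real.norm_of_nonneg ht0]
  exact mul_le_mul_of_nonneg_left (lp.norm_apply_le_norm (p_ne_zero p) x n)
    (pow_nonneg ht0 n)

private lemma summable_norm_aux {t : ℝ} (ht0 : 0 ≤ t) (ht1 : t < 1)
    (x : lp (fun _ : ℕ => ℝ) p) : Summable fun n => ‖t ^ n * x n‖ :=
  Summable.of_nonneg_of_le (fun _ => norm_nonneg _) (bound_aux p ht0 x)
    ((summable_geometric_of_lt_one ht0 ht1).mul_right _)

private lemma summable_aux {t : ℝ} (ht0 : 0 ≤ t) (ht1 : t < 1)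
    (x : lp (fun _ : ℕ => ℝ) p) : Summable fun n => t ^ n * x n :=
  (summable_norm_aux p ht0 ht1 x).of_norm

/-- The functional `x ↦ ∑ tⁿ xₙ` on `ℓ_p`. -/
noncomputable def phiCLM {t : ℝ} (ht0 : 0 ≤ t) (ht1 : t < 1) :
    lp (fun _ : ℕ => ℝ) p →L[ℝ] ℝ :=
  LinearMap.mkContinuous
    { toFun := fun x => ∑' n, t ^ n * x n
      map_add' := by
        intro x y
        show (∑' n, t ^ n * (x + y : lp (fun _ : ℕ => ℝ) p) n)
            = (∑' n, t ^ n * x n) + ∑' n, t ^ n * y n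
        rw [← Summable.tsum_add (summable_aux p ht0 ht1 x) (summable_aux p ht0 ht1 y)]
        refine tsum_congr fun n => ?_
        simp [mul_add]
      map_smul' := by
        intro c x
        show (∑' n, t ^ n * (c • x : lp (fun _ : ℕ => ℝ) p) n)
            = c • ∑' n, t ^ n * x n
        rw [smul_eq_mul, ← tsum_mul_left]
        refine tsum_congr fun n => ?_
        simp
        ring }
    (1 - t)⁻¹
    (by
      intro x
      have h1 : ‖∑' n, t ^ n * x n‖ ≤ ∑' n, ‖t ^ n * x n‖ :=
        norm_tsum_le_tsum_norm (summable_norm_aux p ht0 ht1 x)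
      have h2 : ∑' n, ‖t ^ n * x n‖ ≤ ∑' n, t ^ n * ‖x‖ :=
        Summable.tsum_le_tsum (bound_aux p ht0 x) (summable_norm_aux p ht0 ht1 x)
          ((summable_geometric_of_lt_one ht0 ht1).mul_right _)
      have h3 : ∑' n : ℕ, t ^ n * ‖x‖ = (1 - t)⁻¹ * ‖x‖ := by
        rw [tsum_mul_right, tsum_geometric_of_lt_one ht0 ht1]
      calc ‖∑' n, t ^ n * x n‖ ≤ ∑' n, t ^ n * ‖x‖ := h1.trans h2
        _ = (1 - t)⁻¹ * ‖x‖ := h3)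

lemma phiCLM_single {t : ℝ} (ht0 : 0 ≤ t) (ht1 : t < 1) (n : ℕ) :
    phiCLM p ht0 ht1 (lp.single p n 1) = t ^ n := by
  have h : phiCLM p ht0 ht1 (lp.single p n 1)
      = ∑' m, t ^ m * (lp.single p n (1:ℝ) : lp (fun _ : ℕ => ℝ) p) m := rfl
  rw [h, tsum_eq_single n]
  · rw [lp.single_apply_self, mul_one]
  · intro m hmn
    rw [lp.single_apply_ne p n 1 hmn, mul_zero]

/-- The powers `t ↦ (n ↦ tⁿ)` are linearly independent, via Dedekind's theorem. -/
lemma pow_linearIndependent :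
    LinearIndependent ℝ (fun t : Set.Ioo (0:ℝ) 1 => ⇑(powersHom ℝ (t : ℝ))) :=
  (linearIndependent_monoidHom (Multiplicative ℕ) ℝ).comp
    (fun t : Set.Ioo (0:ℝ) 1 => powersHom ℝ (t : ℝ))
    ((powersHom ℝ).injective.comp Subtype.val_injective)

end aux

/-- For p, q ≥ 1, the set of non-surjective continuous linear operators
ℓ_p → ℓ_q is (1, 𝔠)-lineable. -/
theorem stmt8 (p q : ENNReal) [Fact (1 ≤ p)] [Fact (1 ≤ q)] (hp : p ≠ ⊤) (hq : q ≠ ⊤)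
    (v : lp (fun _ : ℕ => ℝ) p →L[ℝ] lp (fun _ : ℕ => ℝ) q)
    (hv : v ≠ 0) (hsurj : ¬ Function.Surjective ⇑v) :
    ∃ W : Submodule ℝ (lp (fun _ : ℕ => ℝ) p →L[ℝ] lp (fun _ : ℕ => ℝ) q),
      Module.rank ℝ W = Cardinal.continuum ∧ v ∈ W ∧
      ∀ u ∈ W, u ≠ 0 → ¬ Function.Surjective ⇑u := by
  classical
  -- pick a point where v is nonzero
  obtain ⟨x₀, hx₀⟩ : ∃ x₀, v x₀ ≠ 0 := by
    by_contra h
    push_neg at h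
    exact hv (by ext x; simp [h x])
  set y₀ : lp (fun _ : ℕ => ℝ) q := v x₀ with hy₀
  -- the family of operators
  set F : Set.Ioo (0:ℝ) 1 → (lp (fun _ : ℕ => ℝ) p →L[ℝ] lp (fun _ : ℕ => ℝ) q) :=
    fun t => (phiCLM p t.2.1.le t.2.2).smulRight y₀ with hF
  -- F is linearly independent
  have hFind : LinearIndependent ℝ F := by
    rw [linearIndependent_iff']
    intro s c hsum t hts
    have key : ∀ n : ℕ, ∑ r ∈ s, c r * (r : ℝ) ^ n = 0 := by
      intro n
      have h1 := DFunLike.congr_fun hsum (lp.single p n 1)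
      simp only [ContinuousLinearMap.coe_sum', Finset.sum_apply,
        ContinuousLinearMap.coe_smul', Pi.smul_apply, ContinuousLinearMap.smulRight_apply,
        ContinuousLinearMap.zero_apply, hF] at h1
      rw [show (∑ r ∈ s, c r • (phiCLM p r.2.1.le r.2.2 (lp.single p n 1) • y₀))
          = (∑ r ∈ s, c r * (r : ℝ) ^ n) • y₀ by
        rw [Finset.sum_smul]
        refine Finset.sum_congr rfl fun r _ => ?_
        rw [phiCLM_single, smul_smul]] at h1
      rcases smul_eq_zero.1 h1 with h | h
      · exact h
      · exact absurd h hx₀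
    refine linearIndependent_iff'.1 (pow_linearIndependent) s c ?_ t hts
    funext m
    have := key m.toAdd
    simpa [powersHom] using this
  -- the submodule
  refine ⟨Submodule.span ℝ (insert v (Set.range F)), ?_, Submodule.subset_span (Set.mem_insert _ _), ?_⟩
  · -- rank computation
    apply le_antisymm
    · refine (rank_span_le _).trans ?_
      refine (Cardinal.mk_insert_le).trans ?_
      have : #(Set.range F) ≤ 𝔠 := by
        refine Cardinal.mk_range_le.trans ?_
        rw [Cardinal.mk_Ioo_real zero_lt_one]
      calc #(Set.range F) + 1 ≤ 𝔠 + 1 := by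
            exact add_le_add this le_rfl
        _ = 𝔠 := by
            refine Cardinal.add_one_of_aleph0_le Cardinal.aleph0_le_continuum
    · -- lower bound via the independent family inside the span
      have hmem : ∀ t, F t ∈ Submodule.span ℝ (insert v (Set.range F)) := fun t =>
        Submodule.subset_span (Set.mem_insert_of_mem _ (Set.mem_range_self t))
      set G : Set.Ioo (0:ℝ) 1 → (Submodule.span ℝ (insert v (Set.range F))) :=
        fun t => ⟨F t, hmem t⟩ with hG
      have hGind : LinearIndependent ℝ G := by
        apply LinearIndependent.of_comp (Submodule.span ℝ (insert v (Set.range F))).subtype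
        exact hFind
      have := hGind.cardinal_le_rank
      rwa [Cardinal.mk_Ioo_real zero_lt_one] at this
  · -- non-surjectivity
    intro u hu _
    -- every element of the span maps into range v
    have hsub : ∀ w ∈ Submodule.span ℝ (insert v (Set.range F)),
        ∀ x, w x ∈ LinearMap.range (v : lp (fun _ : ℕ => ℝ) p →ₗ[ℝ] lp (fun _ : ℕ => ℝ) q) := by
      intro w hw
      refine Submodule.span_induction ?_ ?_ ?_ ?_ hw
      · rintro w (rfl | ⟨t, rfl⟩) x
        · exact ⟨x, rfl⟩
        · simp only [hF, ContinuousLinearMap.smulRight_apply]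
          exact Submodule.smul_mem _ _ ⟨x₀, rfl⟩
      · intro x; simp
      · intro a b _ _ ha hb x
        simp only [ContinuousLinearMap.add_apply]
        exact Submodule.add_mem _ (ha x) (hb x)
      · intro c a _ ha x
        simp only [ContinuousLinearMap.smul_apply]
        exact Submodule.smul_mem _ _ (ha x)
    intro husurj
    obtain ⟨y, hy⟩ : ∃ y, y ∉ LinearMap.range (v : lp (fun _ : ℕ => ℝ) p →ₗ[ℝ] lp (fun _ : ℕ => ℝ) q) := by
      by_contra h
      push_neg at h
      exact hsurj fun z => h z
    obtain ⟨x, rfl⟩ := husurj y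
    exact hy (hsub u hu x)
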